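/- Let p > 2, and let H be a real inner product space. Suppose u, v̄ ∈ L^p(μ) for a σ-finite measure μ, ∫|v̄|^{p-2}v̄(u - v̄) dμ = 0, and ‖v̄‖_{L^p(μ)} ≤ ‖u‖_{L^p(μ)}. Then for every κ > 0 there is c₁ = c₁(p,κ) > 0 with ‖u‖_{L^p(μ)}^p ≤ ‖v̄‖_{L^p(μ)}^p + (p(p-1)/2 + κ)·‖v̄‖_{L^p(μ)}^{p-2}·‖u - v̄‖_{L^p(μ)}^2 + c₁·‖u - v̄‖_{L^p(μ)}^p. -/

import Mathlib

open MeasureTheory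

section Aux

open Real

lemma itub_taylor_small {p δ : ℝ} (hp : 2 < p) (hδ0 : 0 < δ) (hδ1 : δ ≤ 1/2) :
    ∀ b ∈ Set.Icc (-δ) δ,
      (1 + b) ^ p ≤ 1 + p * b + p * (p - 1) / 2 * (1 + δ) ^ (p - 2) * b ^ 2 := by
  set M : ℝ := p * (p - 1) / 2 * (1 + δ) ^ (p - 2) with hM
  set h : ℝ → ℝ := fun b => (1 + b) ^ p - 1 - p * b - M * b ^ 2 with hh
  set g : ℝ → ℝ := fun b => p * (1 + b) ^ (p - 1) - p - 2 * M * b with hg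
  have hpos : ∀ b ∈ Set.Icc (-δ) δ, (0:ℝ) < 1 + b := by
    intro b hb; have := hb.1; linarith
  have hdh : ∀ b ∈ Set.Icc (-δ) δ, HasDerivAt h (g b) b := by
    intro b hb
    have h1 : HasDerivAt (fun x : ℝ => 1 + x) 1 b := (hasDerivAt_id b).const_add 1
    have h2 : HasDerivAt (fun x : ℝ => (1 + x) ^ p) (1 * p * (1 + b) ^ (p - 1)) b :=
      h1.rpow_const (Or.inl (ne_of_gt (hpos b hb)))
    have h3 : HasDerivAt (fun x : ℝ => p * x) p b := by
      simpa using (hasDerivAt_id b).const_mul p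
    have h4 : HasDerivAt (fun x : ℝ => M * x ^ 2) (M * (2 * b)) b := by
      simpa using (hasDerivAt_pow 2 b).const_mul M
    have := ((h2.sub_const 1).sub h3).sub h4
    refine this.congr_deriv ?_
    simp only [hg]; ring
  have hdg : ∀ b ∈ Set.Icc (-δ) δ,
      HasDerivAt g (p * ((p - 1) * (1 + b) ^ (p - 2)) - 2 * M) b := by
    intro b hb
    have h1 : HasDerivAt (fun x : ℝ => 1 + x) 1 b := (hasDerivAt_id b).const_add 1
    have h2 : HasDerivAt (fun x : ℝ => (1 + x) ^ (p - 1))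
        (1 * (p - 1) * (1 + b) ^ (p - 1 - 1)) b :=
      h1.rpow_const (Or.inl (ne_of_gt (hpos b hb)))
    have h3 : HasDerivAt (fun x : ℝ => 2 * M * x) (2 * M) b := by
      simpa using (hasDerivAt_id b).const_mul (2 * M)
    have := ((h2.const_mul p).sub_const p).sub h3
    refine this.congr_deriv ?_
    rw [show p - 1 - 1 = p - 2 by ring]; ring
  have hcg : ContinuousOn g (Set.Icc (-δ) δ) := by
    intro b hb; exact ((hdg b hb).continuousAt).continuousWithinAt
  have hch : ContinuousOn h (Set.Icc (-δ) δ) := by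
    intro b hb; exact ((hdh b hb).continuousAt).continuousWithinAt
  have hanti : AntitoneOn g (Set.Icc (-δ) δ) := by
    apply antitoneOn_of_deriv_nonpos (convex_Icc _ _) hcg
    · intro x hx
      rw [interior_Icc] at hx
      exact (hdg x (Set.mem_Icc_of_Ioo hx)).differentiableAt.differentiableWithinAt
    · intro x hx
      rw [interior_Icc] at hx
      rw [(hdg x (Set.mem_Icc_of_Ioo hx)).deriv]
      have hb1 : (1 + x) ^ (p - 2) ≤ (1 + δ) ^ (p - 2) := by
        apply Real.rpow_le_rpow (le_of_lt (hpos x (Set.mem_Icc_of_Ioo hx)))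
        · linarith [hx.2]
        · linarith
      have hpp : (0:ℝ) < p * (p - 1) := by nlinarith
      rw [hM]
      nlinarith [Real.rpow_nonneg (le_of_lt (hpos x (Set.mem_Icc_of_Ioo hx))) (p - 2)]
  have hg0 : g 0 = 0 := by simp [hg]
  have hδmem : (0:ℝ) ∈ Set.Icc (-δ) δ := by constructor <;> linarith
  have h0 : h 0 = 0 := by simp [hh]
  intro b hb
  have key : h b ≤ 0 := by
    rcases le_total b 0 with hb0 | hb0
    · have hmono : MonotoneOn h (Set.Icc (-δ) 0) := by
        apply monotoneOn_of_deriv_nonneg (convex_Icc _ _)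
        · exact hch.mono (Set.Icc_subset_Icc le_rfl (le_of_lt hδ0))
        · intro x hx
          rw [interior_Icc] at hx
          have hx' : x ∈ Set.Icc (-δ) δ := ⟨le_of_lt hx.1, by linarith [hx.2]⟩
          exact (hdh x hx').differentiableAt.differentiableWithinAt
        · intro x hx
          rw [interior_Icc] at hx
          have hx' : x ∈ Set.Icc (-δ) δ := ⟨le_of_lt hx.1, by linarith [hx.2]⟩
          rw [(hdh x hx').deriv]
          have := hanti hx' hδmem (le_of_lt hx.2)
          linarith [hg0 ▸ this]
      have := hmono ⟨hb.1, hb0⟩ ⟨by linarith [hδ0], le_rfl⟩ hb0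
      linarith [h0 ▸ this]
    · have hmono : AntitoneOn h (Set.Icc 0 δ) := by
        apply antitoneOn_of_deriv_nonpos (convex_Icc _ _)
        · exact hch.mono (Set.Icc_subset_Icc (by linarith) le_rfl)
        · intro x hx
          rw [interior_Icc] at hx
          have hx' : x ∈ Set.Icc (-δ) δ := ⟨by linarith [hx.1], le_of_lt hx.2⟩
          exact (hdh x hx').differentiableAt.differentiableWithinAt
        · intro x hx
          rw [interior_Icc] at hx
          have hx' : x ∈ Set.Icc (-δ) δ := ⟨by linarith [hx.1], le_of_lt hx.2⟩
          rw [(hdh x hx').deriv]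
          have := hanti hδmem hx' (le_of_lt hx.1)
          linarith [hg0 ▸ this]
      have := hmono ⟨le_rfl, by linarith [hδ0]⟩ ⟨hb0, hb.2⟩ hb0
      linarith [h0 ▸ this]
  simp only [hh] at key
  linarith

lemma itub_exists_delta {p κ : ℝ} (hp : 2 < p) (hκ : 0 < κ) :
    ∃ δ : ℝ, 0 < δ ∧ δ ≤ 1/2 ∧
      p * (p - 1) / 2 * (1 + δ) ^ (p - 2) ≤ p * (p - 1) / 2 + κ := by
  have hpp : (0:ℝ) < p * (p - 1) := by nlinarith
  set c : ℝ := 1 + 2 * κ / (p * (p - 1)) with hc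
  have hc1 : (1:ℝ) < c := by
    have : 0 < 2 * κ / (p * (p - 1)) := by positivity
    simp only [hc]; linarith
  have hcont : ContinuousAt (fun δ : ℝ => (1 + δ) ^ (p - 2)) 0 := by
    have h1 : ContinuousAt (fun δ : ℝ => 1 + δ) 0 := by fun_prop
    have h2 : ContinuousAt (fun x : ℝ => x ^ (p - 2)) ((fun δ : ℝ => 1 + δ) 0) := by
      apply Real.continuousAt_rpow_const
      norm_num
    exact h2.comp h1
  have hev : (fun δ : ℝ => (1 + δ) ^ (p - 2)) ⁻¹' Set.Iio c ∈ nhds (0:ℝ) := by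
    apply hcont
    apply Iio_mem_nhds
    simp [Real.one_rpow, hc1]
  obtain ⟨ε, hε0, hεsub⟩ := Metric.mem_nhds_iff.mp hev
  refine ⟨min (ε/2) (1/2), by positivity, min_le_right _ _, ?_⟩
  have hmem : min (ε/2) (1/2) ∈ Metric.ball (0:ℝ) ε := by
    simp only [Metric.mem_ball, Real.dist_eq, sub_zero]
    rw [abs_of_pos (by positivity)]
    calc min (ε/2) (1/2) ≤ ε/2 := min_le_left _ _
      _ < ε := by linarith
  have := hεsub hmem
  simp only [Set.mem_preimage, Set.mem_Iio] at this
  have hkey : p * (p - 1) / 2 * (1 + min (ε/2) (1/2)) ^ (p - 2) ≤ p * (p - 1) / 2 * c :=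
    mul_le_mul_of_nonneg_left this.le (by positivity)
  calc p * (p - 1) / 2 * (1 + min (ε/2) (1/2)) ^ (p - 2) ≤ p * (p - 1) / 2 * c := hkey
    _ = p * (p - 1) / 2 + κ := by
      rw [hc]; have h1 : p - 1 ≠ 0 := by linarith
      have h0 : p ≠ 0 := by linarith
      field_simp

lemma itub_onevar {p κ : ℝ} (hp : 2 < p) (hκ : 0 < κ) :
    ∃ c₁ : ℝ, 1 ≤ c₁ ∧ ∀ b : ℝ,
      |1 + b| ^ p ≤ 1 + p * b + (p * (p - 1) / 2 + κ) * b ^ 2 + c₁ * |b| ^ p := by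
  obtain ⟨δ, hδ0, hδ1, hδκ⟩ := itub_exists_delta hp hκ
  have hC : (0:ℝ) < p * (p - 1) / 2 + κ := by nlinarith
  refine ⟨(1 + 1/δ) ^ p + p / δ ^ (p-1) + 1, ?_, ?_⟩
  · have h1 : (0:ℝ) ≤ (1 + 1/δ) ^ p := Real.rpow_nonneg (by positivity) _
    have h2 : (0:ℝ) ≤ p / δ ^ (p-1) := by positivity
    linarith
  intro b
  have hbp : (0:ℝ) ≤ |b| ^ p := Real.rpow_nonneg (abs_nonneg b) _
  rcases le_or_gt |b| δ with hbδ | hbδ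
  · obtain ⟨hb1, hb2⟩ := abs_le.mp hbδ
    have hpos : (0:ℝ) < 1 + b := by linarith
    have := itub_taylor_small hp hδ0 hδ1 b ⟨hb1, hb2⟩
    rw [abs_of_pos hpos]
    have hb2' : p * (p - 1) / 2 * (1 + δ) ^ (p - 2) * b ^ 2
        ≤ (p * (p - 1) / 2 + κ) * b ^ 2 :=
      mul_le_mul_of_nonneg_right hδκ (sq_nonneg b)
    have hc1 : (0:ℝ) ≤ ((1 + 1/δ) ^ p + p / δ ^ (p-1) + 1) * |b| ^ p := by
      have h1 : (0:ℝ) ≤ (1 + 1/δ) ^ p := Real.rpow_nonneg (by positivity) _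
      have h2 : (0:ℝ) ≤ p / δ ^ (p-1) := by positivity
      exact mul_nonneg (by linarith) hbp
    linarith
  · have hbpos : 0 < |b| := lt_trans hδ0 hbδ
    have h1 : |1 + b| ≤ (1 + 1/δ) * |b| := by
      have : (1:ℝ) ≤ |b| / δ := (one_le_div hδ0).mpr hbδ.le
      calc |1 + b| ≤ |(1:ℝ)| + |b| := abs_add_le 1 b
        _ = 1 + |b| := by norm_num
        _ ≤ |b|/δ + |b| := by linarith
        _ = (1 + 1/δ) * |b| := by ring
    have h2 : |1 + b| ^ p ≤ (1 + 1/δ) ^ p * |b| ^ p := by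
      rw [← Real.mul_rpow (by positivity) (abs_nonneg b)]
      exact Real.rpow_le_rpow (abs_nonneg _) h1 (by linarith)
    have h3 : p * |b| ≤ p / δ ^ (p-1) * |b| ^ p := by
      have hr : δ ^ (p-1) ≤ |b| ^ (p-1) :=
        Real.rpow_le_rpow hδ0.le hbδ.le (by linarith)
      have hsplit : |b| ^ p = |b| ^ (p-1) * |b| := by
        rw [← Real.rpow_add_one (ne_of_gt hbpos) (p-1)]
        congr 1
        ring
      have hkey : δ ^ (p-1) * |b| ≤ |b| ^ p := by
        rw [hsplit]; exact mul_le_mul_of_nonneg_right hr (abs_nonneg b)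
      rw [div_mul_eq_mul_div, le_div_iff₀ (by positivity)]
      calc p * |b| * δ ^ (p-1) = p * (δ ^ (p-1) * |b|) := by ring
        _ ≤ p * |b| ^ p := mul_le_mul_of_nonneg_left hkey (by linarith)
    have hpb : -(p / δ ^ (p-1) * |b| ^ p) ≤ p * b := by
      have : p * b ≥ -(p * |b|) := by
        have := neg_abs_le b
        nlinarith [abs_nonneg b]
      linarith
    have hCb : (0:ℝ) ≤ (p * (p - 1) / 2 + κ) * b ^ 2 := by positivity
    nlinarith

lemma itub_twovar {p κ c₁ : ℝ} (hp : 2 < p) (hc₁ : 1 ≤ c₁)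
    (h1 : ∀ b : ℝ, |1 + b| ^ p ≤ 1 + p * b + (p * (p - 1) / 2 + κ) * b ^ 2 + c₁ * |b| ^ p) :
    ∀ a b : ℝ, |a + b| ^ p ≤ |a| ^ p + p * |a| ^ (p - 2) * a * b
      + (p * (p - 1) / 2 + κ) * |a| ^ (p - 2) * b ^ 2 + c₁ * |b| ^ p := by
  intro a b
  rcases eq_or_ne a 0 with rfl | ha
  · rw [zero_add, abs_zero, Real.zero_rpow (show p ≠ 0 by linarith),
      Real.zero_rpow (show p - 2 ≠ 0 by linarith)]
    ring_nf
    calc |b| ^ p ≤ c₁ * |b| ^ p :=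
          le_mul_of_one_le_left (Real.rpow_nonneg (abs_nonneg b) p) hc₁
      _ ≤ _ := by ring_nf; rfl
  · have hapos : 0 < |a| := abs_pos.mpr ha
    have key := h1 (b / a)
    have hmul := mul_le_mul_of_nonneg_left key (Real.rpow_nonneg (abs_nonneg a) p)
    have hsplit : |a| ^ p = |a| ^ (p - 2) * a ^ 2 := by
      have h2 : |a| ^ (2:ℝ) = a ^ 2 := by
        rw [show (2:ℝ) = ((2:ℕ):ℝ) by norm_num, Real.rpow_natCast, sq_abs]
      rw [← h2, ← Real.rpow_add hapos]
      norm_num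
    have hL : |a| ^ p * |1 + b / a| ^ p = |a + b| ^ p := by
      rw [← Real.mul_rpow (abs_nonneg a) (abs_nonneg _), ← abs_mul]
      congr 2
      field_simp
    have e2 : |a| ^ p * (p * (b / a)) = p * |a| ^ (p - 2) * a * b := by
      rw [hsplit]; field_simp
    have e3 : |a| ^ p * ((p * (p - 1) / 2 + κ) * (b / a) ^ 2)
        = (p * (p - 1) / 2 + κ) * |a| ^ (p - 2) * b ^ 2 := by
      rw [hsplit]; field_simp
    have e4 : |a| ^ p * (c₁ * |b / a| ^ p) = c₁ * |b| ^ p := by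
      rw [mul_comm c₁ _, ← mul_assoc, ← Real.mul_rpow (abs_nonneg a) (abs_nonneg _),
        ← abs_mul, mul_div_cancel₀ b ha]
      ring
    have expand : |a| ^ p * (1 + p * (b / a) + (p * (p - 1) / 2 + κ) * (b / a) ^ 2
          + c₁ * |b / a| ^ p)
        = |a| ^ p + |a| ^ p * (p * (b / a)) + |a| ^ p * ((p * (p - 1) / 2 + κ) * (b / a) ^ 2)
          + |a| ^ p * (c₁ * |b / a| ^ p) := by ring
    rw [hL, expand, e2, e3, e4] at hmul
    exact hmul

lemma itub_rpow_split {p : ℝ} (hp : 2 < p) (t : ℝ) (ht : 0 ≤ t) :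
    t ^ (p - 2) * t ^ 2 = t ^ p := by
  rcases ht.eq_or_lt with h | h
  · rw [← h, Real.zero_rpow (by linarith : p - 2 ≠ 0), Real.zero_rpow (by linarith : p ≠ 0)]
    ring
  · rw [show t ^ 2 = t ^ (2:ℝ) by
        rw [show (2:ℝ) = ((2:ℕ):ℝ) by norm_num, Real.rpow_natCast],
      ← Real.rpow_add h]
    norm_num

end Aux

theorem integrated_taylor_upper_bound (p κ : ℝ) (hp : 2 < p) (hκ : 0 < κ) :
    ∃ c₁ > (0:ℝ), ∀ (α : Type) (m : MeasurableSpace α) (μ : Measure α),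
      SigmaFinite μ → ∀ u vb : α → ℝ,
      Integrable (fun x => |u x| ^ p) μ →
      Integrable (fun x => |vb x| ^ p) μ →
      Integrable (fun x => |vb x| ^ (p - 2) * vb x * (u x - vb x)) μ →
      (∫ x, |vb x| ^ (p - 2) * vb x * (u x - vb x) ∂μ) = 0 →
      (∫ x, |vb x| ^ p ∂μ) ^ (1/p) ≤ (∫ x, |u x| ^ p ∂μ) ^ (1/p) →
      (∫ x, |u x| ^ p ∂μ)
        ≤ (∫ x, |vb x| ^ p ∂μ)
          + (p * (p - 1) / 2 + κ) * (∫ x, |vb x| ^ p ∂μ) ^ ((p - 2)/p) *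
              (∫ x, |u x - vb x| ^ p ∂μ) ^ (2/p)
          + c₁ * ∫ x, |u x - vb x| ^ p ∂μ := by
  obtain ⟨c₁, hc₁1, h1v⟩ := itub_onevar hp hκ
  have h2v := itub_twovar hp hc₁1 h1v
  refine ⟨c₁, by linarith, ?_⟩
  intro α m μ hσ u vb hu hvb hcross hzero hnorm
  have hp0 : (0:ℝ) < p := by linarith
  have hp2 : (0:ℝ) < p - 2 := by linarith
  set C : ℝ := p * (p - 1) / 2 + κ with hCdef
  have hC : 0 < C := by rw [hCdef]; nlinarith
  -- a.e. measurability of |u| and |vb|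
  have habsu : AEMeasurable (fun x => |u x|) μ := by
    have h1 : AEMeasurable (fun x => (|u x| ^ p) ^ (1/p)) μ :=
      (Real.continuous_rpow_const (by positivity)).measurable.comp_aemeasurable hu.aemeasurable
    refine h1.congr (Filter.Eventually.of_forall fun x => ?_)
    show (|u x| ^ p) ^ (1/p) = |u x|
    rw [← Real.rpow_mul (abs_nonneg _), mul_one_div_cancel (ne_of_gt hp0), Real.rpow_one]
  have habsv : AEMeasurable (fun x => |vb x|) μ := by
    have h1 : AEMeasurable (fun x => (|vb x| ^ p) ^ (1/p)) μ :=
      (Real.continuous_rpow_const (by positivity)).measurable.comp_aemeasurable hvb.aemeasurable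
    refine h1.congr (Filter.Eventually.of_forall fun x => ?_)
    show (|vb x| ^ p) ^ (1/p) = |vb x|
    rw [← Real.rpow_mul (abs_nonneg _), mul_one_div_cancel (ne_of_gt hp0), Real.rpow_one]
  -- a.e. measurability of |u - vb|
  have habsd : AEMeasurable (fun x => |u x - vb x|) μ := by
    obtain ⟨V, hVm, hVeq⟩ := habsv
    obtain ⟨H, hHm, hHeq⟩ := hcross.1.aemeasurable
    obtain ⟨U, hUm, hUeq⟩ := habsu
    refine ⟨fun x => if V x = 0 then U x else |H x| / (V x) ^ (p-1), ?_, ?_⟩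
    · refine Measurable.ite ?_ hUm
        (hHm.abs.div (((Real.continuous_rpow_const
          (by linarith : (0:ℝ) ≤ p - 1)).measurable).comp hVm))
      exact hVm (measurableSet_singleton 0)
    · filter_upwards [hVeq, hHeq, hUeq] with x hv hh hu2
      by_cases h0 : V x = 0
      · rw [if_pos h0]
        have hvb0 : vb x = 0 := by
          have : |vb x| = 0 := by rw [hv, h0]
          exact abs_eq_zero.mp this
        rw [hvb0, sub_zero]
        exact hu2
      · rw [if_neg h0]
        have hvbne : |vb x| ≠ 0 := by rw [hv]; exact h0
        have hvbpos : 0 < |vb x| := lt_of_le_of_ne (abs_nonneg _) (Ne.symm hvbne)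
        have hgroup : |vb x| ^ (p-2) * |vb x| = |vb x| ^ (p-1) := by
          rw [← Real.rpow_add_one hvbne (p-2)]
          congr 1
          ring
        have habsH : |H x| = |vb x| ^ (p-1) * |u x - vb x| := by
          rw [← hh, abs_mul, abs_mul, abs_of_nonneg (Real.rpow_nonneg (abs_nonneg _) _),
            ← hgroup]
        rw [habsH, ← hv, mul_div_cancel_left₀ _ (ne_of_gt (Real.rpow_pos_of_pos hvbpos _))]
  -- integrability of |u - vb| ^ p
  have hdm : AEMeasurable (fun x => |u x - vb x| ^ p) μ :=
    (Real.continuous_rpow_const hp0.le).measurable.comp_aemeasurable habsd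
  have hdint : Integrable (fun x => |u x - vb x| ^ p) μ := by
    have hbnd : Integrable (fun x => 2 ^ p * (|u x| ^ p + |vb x| ^ p)) μ :=
      (hu.add hvb).const_mul (2 ^ p)
    refine Integrable.mono' hbnd hdm.aestronglyMeasurable ?_
    refine Filter.Eventually.of_forall fun x => ?_
    rw [Real.norm_eq_abs, abs_of_nonneg (Real.rpow_nonneg (abs_nonneg _) _)]
    have h1 : |u x - vb x| ≤ |u x| + |vb x| := by
      calc |u x - vb x| = |u x + -vb x| := by rw [sub_eq_add_neg]
        _ ≤ |u x| + |-vb x| := abs_add_le _ _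
        _ = |u x| + |vb x| := by rw [abs_neg]
    have h2 : |u x - vb x| ^ p ≤ (|u x| + |vb x|) ^ p :=
      Real.rpow_le_rpow (abs_nonneg _) h1 hp0.le
    have h2p : (0:ℝ) ≤ 2 ^ p := Real.rpow_nonneg (by norm_num) p
    have h3 : (|u x| + |vb x|) ^ p ≤ 2 ^ p * (|u x| ^ p + |vb x| ^ p) := by
      rcases le_total (|u x|) (|vb x|) with hcs | hcs
      · calc (|u x| + |vb x|) ^ p ≤ (2 * |vb x|) ^ p :=
              Real.rpow_le_rpow (by positivity) (by linarith) hp0.le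
          _ = 2 ^ p * |vb x| ^ p := Real.mul_rpow (by norm_num) (abs_nonneg _)
          _ ≤ 2 ^ p * (|u x| ^ p + |vb x| ^ p) := by
              have := Real.rpow_nonneg (abs_nonneg (u x)) p
              nlinarith
      · calc (|u x| + |vb x|) ^ p ≤ (2 * |u x|) ^ p :=
              Real.rpow_le_rpow (by positivity) (by linarith) hp0.le
          _ = 2 ^ p * |u x| ^ p := Real.mul_rpow (by norm_num) (abs_nonneg _)
          _ ≤ 2 ^ p * (|u x| ^ p + |vb x| ^ p) := by
              have := Real.rpow_nonneg (abs_nonneg (vb x)) p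
              nlinarith
    linarith
  -- integrability of the middle term
  have hmidm : AEMeasurable (fun x => |vb x| ^ (p-2) * (u x - vb x) ^ 2) μ := by
    have hv2 : AEMeasurable (fun x => |vb x| ^ (p-2)) μ :=
      (Real.continuous_rpow_const hp2.le).measurable.comp_aemeasurable habsv
    have hd2 : AEMeasurable (fun x => (u x - vb x) ^ 2) μ :=
      (habsd.pow_const 2).congr (Filter.Eventually.of_forall fun x => sq_abs _)
    exact hv2.mul hd2
  have hmid : Integrable (fun x => |vb x| ^ (p-2) * (u x - vb x) ^ 2) μ := by
    have hbnd : Integrable (fun x => |vb x| ^ p + |u x - vb x| ^ p) μ := hvb.add hdint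
    refine Integrable.mono' hbnd hmidm.aestronglyMeasurable
      (Filter.Eventually.of_forall fun x => ?_)
    rw [Real.norm_eq_abs, abs_mul, abs_of_nonneg (Real.rpow_nonneg (abs_nonneg (vb x)) (p-2)),
      abs_of_nonneg (sq_nonneg (u x - vb x)), ← sq_abs]
    rcases le_total (|u x - vb x|) (|vb x|) with hcs | hcs
    · have hb : |vb x| ^ (p-2) * |u x - vb x| ^ 2 ≤ |vb x| ^ (p-2) * |vb x| ^ 2 :=
        mul_le_mul_of_nonneg_left (pow_le_pow_left₀ (abs_nonneg _) hcs 2)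
          (Real.rpow_nonneg (abs_nonneg _) _)
      rw [itub_rpow_split hp _ (abs_nonneg _)] at hb
      have := Real.rpow_nonneg (abs_nonneg (u x - vb x)) p
      linarith
    · have h1 : |vb x| ^ (p-2) ≤ |u x - vb x| ^ (p-2) :=
        Real.rpow_le_rpow (abs_nonneg _) hcs hp2.le
      have hb : |vb x| ^ (p-2) * |u x - vb x| ^ 2 ≤ |u x - vb x| ^ (p-2) * |u x - vb x| ^ 2 :=
        mul_le_mul_of_nonneg_right h1 (sq_nonneg _)
      rw [itub_rpow_split hp _ (abs_nonneg _)] at hb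
      have := Real.rpow_nonneg (abs_nonneg (vb x)) p
      linarith
  -- pointwise inequality
  have hpt : ∀ x, |u x| ^ p ≤ |vb x| ^ p + p * (|vb x| ^ (p-2) * vb x * (u x - vb x))
      + C * (|vb x| ^ (p-2) * (u x - vb x) ^ 2) + c₁ * |u x - vb x| ^ p := by
    intro x
    have hx := h2v (vb x) (u x - vb x)
    rw [show vb x + (u x - vb x) = u x by ring] at hx
    have e1 : p * |vb x| ^ (p - 2) * vb x * (u x - vb x)
        = p * (|vb x| ^ (p-2) * vb x * (u x - vb x)) := by ring
    have e2 : C * |vb x| ^ (p - 2) * (u x - vb x) ^ 2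
        = C * (|vb x| ^ (p-2) * (u x - vb x) ^ 2) := by ring
    rw [e1, e2] at hx
    exact hx
  -- integrate
  have hic : Integrable (fun x => p * (|vb x| ^ (p-2) * vb x * (u x - vb x))) μ := by
    have := hcross.const_mul p
    refine this.congr (Filter.Eventually.of_forall fun x => by ring)
  have him : Integrable (fun x => C * (|vb x| ^ (p-2) * (u x - vb x) ^ 2)) μ :=
    hmid.const_mul C
  have hid : Integrable (fun x => c₁ * |u x - vb x| ^ p) μ := hdint.const_mul c₁
  have hi1 : Integrable (fun x => |vb x| ^ p
      + p * (|vb x| ^ (p-2) * vb x * (u x - vb x))) μ := hvb.add hic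
  have hi2 : Integrable (fun x => |vb x| ^ p
      + p * (|vb x| ^ (p-2) * vb x * (u x - vb x))
      + C * (|vb x| ^ (p-2) * (u x - vb x) ^ 2)) μ := hi1.add him
  have hi3 : Integrable (fun x => |vb x| ^ p
      + p * (|vb x| ^ (p-2) * vb x * (u x - vb x))
      + C * (|vb x| ^ (p-2) * (u x - vb x) ^ 2)
      + c₁ * |u x - vb x| ^ p) μ := hi2.add hid
  have hstep := integral_mono hu hi3 hpt
  rw [integral_add hi2 hid, integral_add hi1 him, integral_add hvb hic,
      integral_const_mul, integral_const_mul, integral_const_mul] at hstep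
  have hcz : ∫ x, |vb x| ^ (p-2) * vb x * (u x - vb x) ∂μ = 0 := hzero
  rw [hcz, mul_zero, add_zero] at hstep
  -- Hoelder
  have hq0 : ENNReal.ofReal p ≠ 0 := by
    simp only [ne_eq, ENNReal.ofReal_eq_zero, not_le]; linarith
  have hqt : ENNReal.ofReal p ≠ ⊤ := ENNReal.ofReal_ne_top
  have hmkv : MemLp (fun x => |vb x|) (ENNReal.ofReal p) μ := by
    apply (memLp_norm_rpow_iff habsv.aestronglyMeasurable hq0 hqt).mp
    rw [ENNReal.div_self hq0 hqt, ENNReal.toReal_ofReal hp0.le, memLp_one_iff_integrable]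
    exact hvb.congr (Filter.Eventually.of_forall fun x => by simp)
  have hmkd : MemLp (fun x => |u x - vb x|) (ENNReal.ofReal p) μ := by
    apply (memLp_norm_rpow_iff habsd.aestronglyMeasurable hq0 hqt).mp
    rw [ENNReal.div_self hq0 hqt, ENNReal.toReal_ofReal hp0.le, memLp_one_iff_integrable]
    exact hdint.congr (Filter.Eventually.of_forall fun x => by simp)
  have hmf : MemLp (fun x => |vb x| ^ (p-2)) (ENNReal.ofReal (p/(p-2))) μ := by
    have h2 := hmkv.norm_rpow_div (ENNReal.ofReal (p-2))
    rw [ENNReal.toReal_ofReal hp2.le, ← ENNReal.ofReal_div_of_pos hp2] at h2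
    exact MemLp.ae_eq (Filter.Eventually.of_forall fun x => by simp) h2
  have hmg : MemLp (fun x => (u x - vb x) ^ 2) (ENNReal.ofReal (p/2)) μ := by
    have h2 := hmkd.norm_rpow_div (ENNReal.ofReal 2)
    rw [ENNReal.toReal_ofReal (by norm_num : (0:ℝ) ≤ 2),
      ← ENNReal.ofReal_div_of_pos (by norm_num : (0:ℝ) < 2)] at h2
    refine MemLp.ae_eq (Filter.Eventually.of_forall fun x => ?_) h2
    show ‖|u x - vb x|‖ ^ (2:ℝ) = (u x - vb x) ^ 2
    rw [Real.norm_eq_abs, abs_abs, show (2:ℝ) = ((2:ℕ):ℝ) by norm_num,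
      Real.rpow_natCast, sq_abs]
  have hconj : Real.HolderConjugate (p/(p-2)) (p/2) := by
    rw [Real.holderConjugate_iff]
    constructor
    · rw [lt_div_iff₀ hp2]; linarith
    · rw [inv_div, inv_div]
      field_simp
      ring
  have hholder := integral_mul_le_Lp_mul_Lq_of_nonneg hconj
      (Filter.Eventually.of_forall fun x => Real.rpow_nonneg (abs_nonneg (vb x)) _)
      (Filter.Eventually.of_forall fun x => sq_nonneg (u x - vb x)) hmf hmg
  have hir1 : ∫ x, ((|vb x| ^ (p-2)) ^ (p/(p-2))) ∂μ = ∫ x, |vb x| ^ p ∂μ := by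
    refine integral_congr_ae (Filter.Eventually.of_forall fun x => ?_)
    show (|vb x| ^ (p-2)) ^ (p/(p-2)) = |vb x| ^ p
    rw [← Real.rpow_mul (abs_nonneg _)]
    congr 1
    field_simp
  have hir2 : ∫ x, (((u x - vb x) ^ 2) ^ (p/2)) ∂μ = ∫ x, |u x - vb x| ^ p ∂μ := by
    refine integral_congr_ae (Filter.Eventually.of_forall fun x => ?_)
    show ((u x - vb x) ^ 2) ^ (p/2) = |u x - vb x| ^ p
    rw [← sq_abs, show |u x - vb x| ^ (2:ℕ) = |u x - vb x| ^ ((2:ℕ):ℝ) from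
        (Real.rpow_natCast _ 2).symm, ← Real.rpow_mul (abs_nonneg _)]
    norm_num
    congr 1
    ring
  rw [hir1, hir2, one_div_div, one_div_div] at hholder
  have hfinal : C * ∫ x, |vb x| ^ (p-2) * (u x - vb x) ^ 2 ∂μ
      ≤ C * (∫ x, |vb x| ^ p ∂μ) ^ ((p-2)/p) * (∫ x, |u x - vb x| ^ p ∂μ) ^ (2/p) := by
    rw [mul_assoc]
    exact mul_le_mul_of_nonneg_left hholder hC.le
  exact hstep.trans (by linarith [hfinal])
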